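/- In the graph Γ_⋆ (q bouquets of p circles and one bouquet of r circles joined to a center v by edges of length L), any family of homologically independent loops based at a common point each of length at most 2L has cardinality at most p + r, which is at most 2p − 1. -/

import Mathlib

/-- A metric graph: a finite graph (multiple edges and loops allowed) with a
nonnegative length assigned to each edge. -/
structure MGraph where
  V : Type
  E : Type
  fV : Fintype V
  fE : Fintype E
  deV : DecidableEq V
  deE : DecidableEq E
  s : E → V
  t : E → V
  len : E → ℝ
  len_nonneg : ∀ e, 0 ≤ len e

attribute [instance] MGraph.fV MGraph.fE MGraph.deV MGraph.deE

namespace MGraph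

variable (G : MGraph)

/-- The total length (one-dimensional Hausdorff measure) of the metric graph. -/
def totalLength : ℝ := ∑ e, G.len e

/-- A dart is an edge together with an orientation. -/
def dstart (d : G.E × Bool) : G.V := if d.2 then G.s d.1 else G.t d.1

def dend (d : G.E × Bool) : G.V := if d.2 then G.t d.1 else G.s d.1

/-- `G.IsWalk u v l` : the list of darts `l` is a walk from `u` to `v`. -/
def IsWalk : G.V → G.V → List (G.E × Bool) → Prop
  | u, v, [] => u = v
  | u, v, d :: l => G.dstart d = u ∧ IsWalk (G.dend d) v l

/-- The length of a walk. -/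
def walkLen (l : List (G.E × Bool)) : ℝ := (l.map fun d => G.len d.1).sum

/-- The real cycle vector of a closed walk: its class in `H₁(Γ, ℝ) ⊆ ℝ^E`, recording
the signed number of times each edge is traversed. A family of loops is homologically
independent iff their cycle vectors are linearly independent. -/
def cycVec (l : List (G.E × Bool)) : G.E → ℝ := fun e =>
  (l.map fun d => if d.1 = e then (if d.2 then (1 : ℝ) else -1) else 0).sum



/-- The graph is connected. -/
def Connected : Prop := ∀ u v : G.V, ∃ l, G.IsWalk u v l

/-- `G.bettiEq b` : the first Betti number `e - v + 1` of the connected graph `G`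
equals `b`. -/
def bettiEq (b : ℕ) : Prop :=
  (Fintype.card G.E : ℤ) - (Fintype.card G.V : ℤ) + 1 = (b : ℤ)

/-- The path distance between two vertices. -/
noncomputable def vdist (u v : G.V) : ℝ :=
  sInf {x | ∃ l, G.IsWalk u v l ∧ G.walkLen l = x}

/-- The list of vertices visited by a walk. -/
def walkVerts (l : List (G.E × Bool)) : List G.V := l.map G.dstart

/-- The distance from a vertex to a (nonempty) walk. -/
noncomputable def distToWalk (x : G.V) (l : List (G.E × Bool)) : ℝ :=
  sInf {d | ∃ v ∈ G.walkVerts l, G.vdist x v = d}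

/-- The distance between two loops. -/
noncomputable def loopDist (l₁ l₂ : List (G.E × Bool)) : ℝ :=
  sInf {d | ∃ u ∈ G.walkVerts l₁, ∃ v ∈ G.walkVerts l₂, G.vdist u v = d}

/-- A simple loop (embedded circle): a nonempty closed walk repeating no edge and
no vertex. -/
def IsSimpleLoop (l : List (G.E × Bool)) : Prop :=
  l ≠ [] ∧ (∃ v, G.IsWalk v v l) ∧ (l.map Prod.fst).Nodup ∧ (G.walkVerts l).Nodup

end MGraph

namespace MGraph

variable (G : MGraph)

theorem isWalk_append' {l₁ l₂ : List (G.E × Bool)} {u v : G.V}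
    (h : G.IsWalk u v (l₁ ++ l₂)) : ∃ w, G.IsWalk u w l₁ ∧ G.IsWalk w v l₂ := by
  induction l₁ generalizing u with
  | nil => exact ⟨u, rfl, h⟩
  | cons d l ih =>
    obtain ⟨h1, h2⟩ := h
    obtain ⟨w, hw1, hw2⟩ := ih h2
    exact ⟨w, ⟨h1, hw1⟩, hw2⟩

theorem walk_telescope (φ : G.V → ℝ) : ∀ {l : List (G.E × Bool)} {u v : G.V},
    G.IsWalk u v l → (l.map fun d => φ (G.dend d) - φ (G.dstart d)).sum = φ v - φ u := by
  intro l
  induction l with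
  | nil => intro u v h; rw [show u = v from h]; simp
  | cons d l ih =>
    intro u v h
    obtain ⟨h1, h2⟩ := h
    simp only [List.map_cons, List.sum_cons, ih h2, h1]
    ring

theorem exists_cross (ε : G.E) (P : G.V → Prop)
    (hH : ∀ d : G.E × Bool, d.1 ≠ ε → (P (G.dstart d) ↔ P (G.dend d))) :
    ∀ {l : List (G.E × Bool)} {u v : G.V}, G.IsWalk u v l → P u → ¬ P v →
      ∃ d ∈ l, d.1 = ε := by
  intro l
  induction l with
  | nil => intro u v h hu hv; exact absurd ((show u = v from h) ▸ hu) hv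
  | cons d l ih =>
    intro u v h hu hv
    obtain ⟨h1, h2⟩ := h
    by_cases hd : d.1 = ε
    · exact ⟨d, List.mem_cons_self, hd⟩
    · obtain ⟨d', hd', he⟩ := ih h2 ((hH d hd).mp (h1 ▸ hu)) hv
      exact ⟨d', List.mem_cons_of_mem _ hd', he⟩

theorem dend_eq_dstart_neg (d : G.E × Bool) : G.dend d = G.dstart (d.1, !d.2) := by
  rcases d with ⟨e, b⟩; cases b <;> rfl

theorem cycVec_eq_zero (e : G.E) {l : List (G.E × Bool)} (h : ∀ d ∈ l, d.1 ≠ e) :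
    G.cycVec l e = 0 := by
  apply List.sum_eq_zero
  intro x hx
  simp only [List.mem_map] at hx
  obtain ⟨d, hd, rfl⟩ := hx
  simp [h d hd]

theorem len_le_walkLen {d : G.E × Bool} {l : List (G.E × Bool)} (h : d ∈ l) :
    G.len d.1 ≤ G.walkLen l :=
  List.single_le_sum
    (by intro x hx; simp only [List.mem_map] at hx; obtain ⟨d', _, rfl⟩ := hx
        exact G.len_nonneg _) _ (List.mem_map_of_mem h)

theorem cycVec_of_potential (e : G.E) (φ : G.V → ℝ)
    (hφ : ∀ d : G.E × Bool,
      (if d.1 = e then (if d.2 then (1:ℝ) else -1) else 0) = φ (G.dend d) - φ (G.dstart d))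
    {x : G.V} {l : List (G.E × Bool)} (h : G.IsWalk x x l) : G.cycVec l e = 0 := by
  show (l.map fun d => if d.1 = e then (if d.2 then (1:ℝ) else -1) else 0).sum = 0
  rw [funext hφ, G.walk_telescope φ h, sub_self]

theorem short_walk_no_far_edge (ε e : G.E) (P : G.V → Prop)
    (hH : ∀ d : G.E × Bool, d.1 ≠ ε → (P (G.dstart d) ↔ P (G.dend d)))
    (heP : ∀ b : Bool, ¬ P (G.dstart (e, b)))
    {x : G.V} {l : List (G.E × Bool)} (hwalk : G.IsWalk x x l) (hx : P x)
    (hshort : G.walkLen l < G.len ε + G.len ε + G.len e) :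
    G.cycVec l e = 0 := by
  apply G.cycVec_eq_zero
  intro d₀ hmem hde
  obtain ⟨l₁, l₂, rfl⟩ := List.append_of_mem hmem
  obtain ⟨w, hw1, hw2⟩ := G.isWalk_append' hwalk
  obtain ⟨hst, hw3⟩ := hw2
  have hPw : ¬ P w := by
    rw [← hst]; have := heP d₀.2; rw [← hde] at this; exact this
  have hPend : ¬ P (G.dend d₀) := by
    rw [G.dend_eq_dstart_neg]; have := heP (!d₀.2); rw [← hde] at this; exact this
  obtain ⟨d₁, hd₁, he₁⟩ := G.exists_cross ε P hH hw1 hx hPw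
  have hH' : ∀ d : G.E × Bool, d.1 ≠ ε → ((¬ P (G.dstart d)) ↔ ¬ P (G.dend d)) :=
    fun d hd => not_congr (hH d hd)
  obtain ⟨d₂, hd₂, he₂⟩ :=
    G.exists_cross ε (fun v => ¬ P v) hH' hw3 hPend (not_not_intro hx)
  have h1 : G.len ε ≤ G.walkLen l₁ := by rw [← he₁]; exact G.len_le_walkLen hd₁
  have h2 : G.len ε ≤ G.walkLen l₂ := by rw [← he₂]; exact G.len_le_walkLen hd₂
  have h3 : G.walkLen (l₁ ++ d₀ :: l₂) = G.walkLen l₁ + G.len e + G.walkLen l₂ := by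
    simp only [walkLen, List.map_append, List.map_cons, List.sum_append, List.sum_cons, hde]
    ring
  rw [h3] at hshort
  linarith

end MGraph

/-- The graph `Γ_⋆` of the paper: a central vertex `0`, bouquet vertices `1,...,q+1`;
for `i = 1,...,q` the bouquet `X_i` consists of `p` circles of length `l/p` each
(total length `l`) at vertex `i`, joined to the center by an edge of length `L`;
the bouquet `X_{q+1}` consists of `r` circles of length `1/2` each at vertex `q+1`,
joined to the center by an edge of length `r/2`, so that
`length(X_{q+1}) + length(w_{q+1}) = r`. -/
noncomputable def starGraph (p q r : ℕ) (L l : ℝ) (hL : 0 ≤ L) (hl : 0 ≤ l) :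
    MGraph where
  V := Fin (q + 2)
  E := (Fin q × Fin p) ⊕ (Fin r ⊕ Fin (q + 1))
  fV := inferInstance
  fE := inferInstance
  deV := inferInstance
  deE := inferInstance
  s := fun e =>
    match e with
    | .inl (i, _) => ⟨i.1 + 1, by have := i.2; omega⟩
    | .inr (.inl _) => ⟨q + 1, by omega⟩
    | .inr (.inr _) => ⟨0, by omega⟩
  t := fun e =>
    match e with
    | .inl (i, _) => ⟨i.1 + 1, by have := i.2; omega⟩
    | .inr (.inl _) => ⟨q + 1, by omega⟩
    | .inr (.inr k) => ⟨k.1 + 1, by have := k.2; omega⟩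
  len := fun e =>
    match e with
    | .inl _ => l / p
    | .inr (.inl _) => 1 / 2
    | .inr (.inr k) => if k.1 < q then L else (r : ℝ) / 2
  len_nonneg := by
    rintro (⟨i, j⟩ | (x | k))
    · exact div_nonneg hl (Nat.cast_nonneg p)
    · norm_num
    · dsimp only
      split
      · exact hL
      · positivity

theorem starGraph_cycVec_bridge (p q r : ℕ) (L l : ℝ) (hL : 0 ≤ L) (hl : 0 ≤ l)
    {x : (starGraph p q r L l hL hl).V} {w : List ((starGraph p q r L l hL hl).E × Bool)}
    (hwalk : (starGraph p q r L l hL hl).IsWalk x x w) (k : Fin (q+1)) :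
    (starGraph p q r L l hL hl).cycVec w (.inr (.inr k)) = 0 := by
  apply (starGraph p q r L l hL hl).cycVec_of_potential _
    (fun v : Fin (q+2) => if v = (⟨k.1+1, by omega⟩ : Fin (q+2)) then (1:ℝ) else 0) _ hwalk
  rintro ⟨(⟨i, j⟩ | (a | k')), b⟩ <;> cases b <;>
    simp only [starGraph, MGraph.dstart, MGraph.dend, Fin.ext_iff] <;> simp <;> split_ifs <;> simp_all <;> omega


theorem starGraph_cycVec_circle (p q r : ℕ) (L l : ℝ) (hL : 0 < L) (hl : 0 < l) (hp : 1 ≤ p)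
    {x : (starGraph p q r L l hL.le hl.le).V}
    {w : List ((starGraph p q r L l hL.le hl.le).E × Bool)}
    (hwalk : (starGraph p q r L l hL.le hl.le).IsWalk x x w)
    (hshort : (starGraph p q r L l hL.le hl.le).walkLen w ≤ 2 * L)
    (i : Fin q) (j : Fin p) (hx : x.1 ≠ i.1 + 1) :
    (starGraph p q r L l hL.le hl.le).cycVec w (.inl (i, j)) = 0 := by
  have hiq : i.1 < q + 1 := by omega
  apply (starGraph p q r L l hL.le hl.le).short_walk_no_far_edge
    (Sum.inr (Sum.inr ⟨i.1, hiq⟩)) _ (fun v : Fin (q+2) => v.1 ≠ i.1 + 1) ?_ ?_ hwalk hx ?_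
  · rintro ⟨(⟨a, b⟩ | (a | k')), bb⟩ hd <;> cases bb <;>
      simp_all [starGraph, MGraph.dstart, MGraph.dend, Fin.ext_iff] <;> omega
  · intro b; cases b <;> simp [starGraph, MGraph.dstart, MGraph.dend]
  · have h1 : (starGraph p q r L l hL.le hl.le).len (Sum.inr (Sum.inr ⟨i.1, hiq⟩)) = L := by
      simp [starGraph, i.2]
    have h2 : (starGraph p q r L l hL.le hl.le).len (Sum.inl (i, j)) = l / p := by
      simp [starGraph]
    rw [h1, h2]
    have : 0 < l / p := by positivity
    linarith

theorem starGraph_cycVec_tail (p q r : ℕ) (L l : ℝ) (hL : 0 < L) (hl : 0 < l)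
    {x : (starGraph p q r L l hL.le hl.le).V}
    {w : List ((starGraph p q r L l hL.le hl.le).E × Bool)}
    (hwalk : (starGraph p q r L l hL.le hl.le).IsWalk x x w)
    (hshort : (starGraph p q r L l hL.le hl.le).walkLen w ≤ 2 * L)
    (i₀ : Fin q) (j : Fin r) (hx : x.1 = i₀.1 + 1) :
    (starGraph p q r L l hL.le hl.le).cycVec w (.inr (.inl j)) = 0 := by
  have hiq : i₀.1 < q + 1 := by omega
  apply (starGraph p q r L l hL.le hl.le).short_walk_no_far_edge
    (Sum.inr (Sum.inr ⟨i₀.1, hiq⟩)) _ (fun v : Fin (q+2) => v.1 = i₀.1 + 1) ?_ ?_ hwalk hx ?_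
  · rintro ⟨(⟨a, b⟩ | (a | k')), bb⟩ hd <;> cases bb <;>
      simp_all [starGraph, MGraph.dstart, MGraph.dend, Fin.ext_iff] <;> omega
  · intro b; cases b <;> simp [starGraph, MGraph.dstart, MGraph.dend] <;> omega
  · have h1 : (starGraph p q r L l hL.le hl.le).len (Sum.inr (Sum.inr ⟨i₀.1, hiq⟩)) = L := by
      simp [starGraph, i₀.2]
    have h2 : (starGraph p q r L l hL.le hl.le).len (Sum.inr (Sum.inl j)) = 1 / 2 := by
      simp [starGraph]
    rw [h1, h2]
    linarith

theorem card_le_of_restricted_independent {k : ℕ} {E : Type} [Fintype E] [DecidableEq E]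
    {ι : Type} [Fintype ι] (f : Fin k → E → ℝ) (hind : LinearIndependent ℝ f)
    (emb : ι → E) (hsupp : ∀ e, (∀ j, e ≠ emb j) → ∀ i, f i e = 0) :
    k ≤ Fintype.card ι := by
  have hli : LinearIndependent ℝ (fun i : Fin k => fun j : ι => f i (emb j)) := by
    rw [Fintype.linearIndependent_iff] at hind ⊢
    intro g hg
    apply hind g
    funext e
    by_cases he : ∃ j, e = emb j
    · obtain ⟨j, rfl⟩ := he
      have := congrFun hg j
      simpa [Finset.sum_apply] using this
    · push_neg at he
      simp [Finset.sum_apply, hsupp e he]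
  have := hli.fintype_card_le_finrank
  simpa [Module.finrank_pi] using this

/-- In the graph `Γ_⋆` (`q` bouquets of `p` circles and one bouquet of
`r` circles joined to a center by edges of length `L`), any family of homologically
independent loops based at a common point, each of length at most `2L`, has
cardinality at most `p + r`, which is at most `2p − 1`. -/
theorem starGraph_short_independent_loops_bound (m p q r : ℕ) (hp : 1 ≤ p)
    (hpm : p ≤ m) (hm : m = p * q + r) (hr : r < p)
    (L l : ℝ) (hL : 0 < L) (hl : 0 < l)
    (k : ℕ) (x : (starGraph p q r L l hL.le hl.le).V)
    (c : Fin k → List ((starGraph p q r L l hL.le hl.le).E × Bool))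
    (hbased : ∀ i, (starGraph p q r L l hL.le hl.le).IsWalk x x (c i))
    (hshort : ∀ i, (starGraph p q r L l hL.le hl.le).walkLen (c i) ≤ 2 * L)
    (hind : LinearIndependent ℝ
      (fun i => (starGraph p q r L l hL.le hl.le).cycVec (c i))) :
    k ≤ p + r ∧ p + r ≤ 2 * p - 1 := by
  refine ⟨?_, by omega⟩
  by_cases hc : 1 ≤ x.1 ∧ x.1 ≤ q
  · have hq1 : x.1 - 1 < q := by omega
    have hx : x.1 = (⟨x.1 - 1, hq1⟩ : Fin q).1 + 1 := by simp; omega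
    have hk : k ≤ Fintype.card (Fin p) := by
      apply card_le_of_restricted_independent _ hind
        (fun j : Fin p => (Sum.inl ((⟨x.1 - 1, hq1⟩ : Fin q), j) :
          (starGraph p q r L l hL.le hl.le).E))
      rintro (⟨i', j'⟩ | (j' | k')) he i
      · refine starGraph_cycVec_circle p q r L l hL hl hp (hbased i) (hshort i) i' j' ?_
        intro hxx
        exact he j' (by rw [show i' = (⟨x.1 - 1, hq1⟩ : Fin q) from Fin.ext (by omega)])
      · exact starGraph_cycVec_tail p q r L l hL hl (hbased i) (hshort i) _ j' hx
      · exact starGraph_cycVec_bridge p q r L l hL.le hl.le (hbased i) k'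
    simp only [Fintype.card_fin] at hk
    omega
  · have hk : k ≤ Fintype.card (Fin r) := by
      apply card_le_of_restricted_independent _ hind
        (fun j : Fin r => (Sum.inr (Sum.inl j) : (starGraph p q r L l hL.le hl.le).E))
      rintro (⟨i', j'⟩ | (j' | k')) he i
      · refine starGraph_cycVec_circle p q r L l hL hl hp (hbased i) (hshort i) i' j' ?_
        have := i'.2
        have := x.2
        omega
      · exact absurd rfl (he j')
      · exact starGraph_cycVec_bridge p q r L l hL.le hl.le (hbased i) k'
    simp only [Fintype.card_fin] at hk
    omega
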